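/- For all x, y ∈ ℝ, the kernel of K_hr*·K_hr, namely (K_hr*K_hr)(x,y) = ∫_ℝ conj(K_hr(r,x))·K_hr(r,y) dr, is given explicitly by √(π/A) · exp{ −[(W⁴ + W²(a·conj(ζ²) + (a−ib)·Re ζ²) + (a/2)(a−ib))/A]·x² − [(W⁴ + W²(a·ζ² + (a+ib)·Re ζ²) + (a/2)(a+ib))/A]·y² + (2W⁴/A)·x·y }, where A = 2W²·Re ζ² + a. -/

import Mathlib

open MeasureTheory Complex Real
open scoped ComplexInnerProductSpace

noncomputable section

/-- The Hilbert space `L²(ℝ, ℂ)`. -/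
abbrev Hsp : Type := Lp ℂ 2 (volume : Measure ℝ)

/-- `T` is the integral operator on `L²(ℝ)` with kernel `k`. -/
def IsKerOp (k : ℝ → ℝ → ℂ) (T : Hsp →L[ℂ] Hsp) : Prop :=
  ∀ f : Hsp, ∀ᵐ x : ℝ, (T f : ℝ → ℂ) x = ∫ y : ℝ, k x y * (f : ℝ → ℂ) y

/-- The harmonic-oscillator kernel
`K_hr(x,y) = exp(−W²ζ²(x−y)² − ((a+ib)/2)(x²+y²))`. -/
def kerHr (W : ℝ) (ζ : ℂ) (a b : ℝ) (x y : ℝ) : ℂ :=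
  Complex.exp (-(W : ℂ)^2 * ζ^2 * ((x : ℂ) - (y : ℂ))^2
    - (((a : ℂ) + (b : ℂ) * Complex.I) / 2) * ((x : ℂ)^2 + (y : ℂ)^2))

/-- The eigenvalues `λ_j^hr` of the harmonic oscillator (principal square root). -/
def lamHr (W : ℝ) (ζ : ℂ) (a b : ℝ) (αhr : ℂ) (j : ℕ) : ℂ :=
  ((π : ℂ) / ((W : ℂ)^2 * ζ^2 + αhr + ((a : ℂ) + (b : ℂ) * Complex.I) / 2)) ^ (1/2 : ℂ) *
    (((W : ℂ)^2 * ζ^2) / ((W : ℂ)^2 * ζ^2 + αhr + ((a : ℂ) + (b : ℂ) * Complex.I) / 2)) ^ j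

/-- The squared singular values `(s_j^hr)²` of the harmonic oscillator, where
`A = 2W²·Re ζ² + a`. -/
def ssqHr (W a A : ℝ) (j : ℕ) : ℝ :=
  Real.sqrt (π^2 / (W^4 + 2*a*A + Real.sqrt ((2*W^4 + a*A) * (a*A)))) *
    (W^4 / (W^4 + 2*a*A + Real.sqrt ((2*W^4 + a*A) * (a*A)))) ^ j

/-- The (complex) Gaussian `g_α(x) = (2α/π)^{1/4}·exp(−αx²)`, principal branch. -/
def gaussC (α : ℂ) (x : ℝ) : ℂ :=
  (2 * α / (π : ℂ)) ^ (1/4 : ℂ) * Complex.exp (-α * (x : ℂ)^2)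

end

set_option maxHeartbeats 2000000 in
/-- explicit formula for the kernel of `K_hr*·K_hr`, with `A = 2W²Re ζ² + a`. -/
theorem stmt_7 :
    ∀ (W : ℝ) (ζ : ℂ) (a b : ℝ), 0 < W → ‖ζ‖ = 1 → 0 < (ζ^2).re → 0 < a →
    ∀ x y : ℝ,
      (∫ r : ℝ, starRingEnd ℂ (kerHr W ζ a b r x) * kerHr W ζ a b r y) =
        (Real.sqrt (π / (2*W^2*(ζ^2).re + a)) : ℂ) *
        Complex.exp (
          -(((W : ℂ)^4 + (W : ℂ)^2 * ((a : ℂ) * starRingEnd ℂ (ζ^2)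
              + ((a : ℂ) - (b : ℂ) * Complex.I) * ((ζ^2).re : ℂ))
              + ((a : ℂ)/2) * ((a : ℂ) - (b : ℂ) * Complex.I))
            / ((2*W^2*(ζ^2).re + a : ℝ) : ℂ)) * (x : ℂ)^2
          - (((W : ℂ)^4 + (W : ℂ)^2 * ((a : ℂ) * ζ^2
              + ((a : ℂ) + (b : ℂ) * Complex.I) * ((ζ^2).re : ℂ))
              + ((a : ℂ)/2) * ((a : ℂ) + (b : ℂ) * Complex.I))
            / ((2*W^2*(ζ^2).re + a : ℝ) : ℂ)) * (y : ℂ)^2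
          + ((2 * (W : ℂ)^4) / ((2*W^2*(ζ^2).re + a : ℝ) : ℂ)) * (x : ℂ) * (y : ℂ)) := by
  intro W ζ a b hW hζ hre ha x y
  set z : ℂ := ζ^2 with hz
  set w : ℂ := starRingEnd ℂ z with hw
  have hz1 : ‖z‖ = 1 := by rw [hz, norm_pow, hζ]; norm_num
  have hzw : z * w = 1 := by
    rw [hw, Complex.mul_conj, Complex.normSq_eq_norm_sq, hz1]
    norm_num
  have hre' : z + w = 2 * (z.re : ℂ) := by
    rw [hw, Complex.add_conj]; push_cast; ring
  clear_value z w
  have hA : (0:ℝ) < 2*W^2*z.re + a := by positivity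
  set A : ℝ := 2*W^2*z.re + a with hAdef
  have hAne : (A : ℂ) ≠ 0 := by exact_mod_cast hA.ne'
  have hAc : (A : ℂ) = 2*(W:ℂ)^2*(z.re:ℂ) + (a:ℂ) := by rw [hAdef]; push_cast; ring
  clear_value A
  have hb : (-(A : ℂ)).re < 0 := by simpa using hA
  have key := integral_cexp_quadratic hb
    (2*(W:ℂ)^2*(w * x + z * y))
    (-(W:ℂ)^2*w*(x:ℂ)^2 - (W:ℂ)^2*z*(y:ℂ)^2
      - (((a:ℂ) - (b:ℂ)*Complex.I)/2)*(x:ℂ)^2 - (((a:ℂ) + (b:ℂ)*Complex.I)/2)*(y:ℂ)^2)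
  have hpt : ∀ r : ℝ, starRingEnd ℂ (kerHr W ζ a b r x) * kerHr W ζ a b r y =
      Complex.exp (-(A:ℂ) * (r:ℂ)^2 + (2*(W:ℂ)^2*(w * x + z * y)) * (r:ℂ)
        + (-(W:ℂ)^2*w*(x:ℂ)^2 - (W:ℂ)^2*z*(y:ℂ)^2
          - (((a:ℂ) - (b:ℂ)*Complex.I)/2)*(x:ℂ)^2 - (((a:ℂ) + (b:ℂ)*Complex.I)/2)*(y:ℂ)^2)) := by
    intro r
    rw [kerHr, kerHr, ← Complex.exp_conj, ← Complex.exp_add]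
    congr 1
    simp only [map_sub, map_mul, map_neg, map_add, map_div₀, map_pow, map_ofNat,
      Complex.conj_ofReal, Complex.conj_I, ← hz, ← hw]
    push_cast
    linear_combination (-(W:ℂ)^2 * (r:ℂ)^2) * hre' + (r:ℂ)^2 * hAc
  rw [show (∫ r : ℝ, starRingEnd ℂ (kerHr W ζ a b r x) * kerHr W ζ a b r y)
      = ∫ r : ℝ, Complex.exp (-(A:ℂ) * (r:ℂ)^2 + (2*(W:ℂ)^2*(w * x + z * y)) * (r:ℂ)
        + (-(W:ℂ)^2*w*(x:ℂ)^2 - (W:ℂ)^2*z*(y:ℂ)^2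
          - (((a:ℂ) - (b:ℂ)*Complex.I)/2)*(x:ℂ)^2 - (((a:ℂ) + (b:ℂ)*Complex.I)/2)*(y:ℂ)^2))
    from integral_congr_ae (Filter.Eventually.of_forall hpt), key]
  congr 1
  · rw [neg_neg, show ((π:ℂ)/(A:ℂ)) = ((π/A : ℝ) : ℂ) by push_cast; ring,
      Real.sqrt_eq_rpow, Complex.ofReal_cpow (by positivity)]
    norm_num
  · congr 1
    have hrec' : ((z.re : ℝ) : ℂ) = (z + w)/2 := by linear_combination -hre'/2
    have hA2 : (A : ℂ) = (W:ℂ)^2*(z+w) + (a:ℂ) := by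
      rw [hAc]; linear_combination (-(W:ℂ)^2) * hre'
    rw [show (4:ℂ) * -(A:ℂ) = -(4*(A:ℂ)) from by ring, div_neg, sub_neg_eq_add, hrec']
    linear_combination (-(W:ℂ)^4*((x:ℂ)-(y:ℂ))^2 * ((A:ℂ))⁻¹) * hzw
      - ((((W:ℂ)^2*w+((a:ℂ)-(b:ℂ)*Complex.I)/2)*(x:ℂ)^2
          + ((W:ℂ)^2*z+((a:ℂ)+(b:ℂ)*Complex.I)/2)*(y:ℂ)^2) * ((A:ℂ))⁻¹) * hA2
      + ((W:ℂ)^2*w*(x:ℂ)^2 + (W:ℂ)^2*z*(y:ℂ)^2 + (((a:ℂ)-(b:ℂ)*Complex.I)/2)*(x:ℂ)^2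
          + (((a:ℂ)+(b:ℂ)*Complex.I)/2)*(y:ℂ)^2) * (mul_inv_cancel₀ hAne)
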